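/- There exists a sequence (a_i)_{i≥1} of integers such that, letting p_i denote the i-th prime and R_i := a_i + p_i^4 ℤ, the set F_R := ℕ ∖ ⋃_{i≥1} R_i does not have a logarithmic density; that is, liminf_{N→∞} (1/log N) ∑_{m ∈ F_R, 1 ≤ m ≤ N} 1/m is strictly smaller than limsup_{N→∞} (1/log N) ∑_{m ∈ F_R, 1 ≤ m ≤ N} 1/m. (In particular there is a sieve over ℚ, supported on the pairwise coprime ideals p_i^4ℤ with each R_i a single congruence class, whose set of R-free numbers has no logarithmic density, hence no natural density.) -/

import Mathlib

open Filter Topology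

section Aux

/-- The set of "targeted" integers: union of blocks `(2^(500*1000^k), 2^(1000*1000^k)]`. -/
def ZB : Set ℕ := {i | ∃ k : ℕ, 2 ^ (500 * 1000 ^ k) < i ∧ i ≤ 2 ^ (1000 * 1000 ^ k)}

noncomputable def aa : ℕ → ℤ := fun i =>
  haveI := Classical.propDecidable (i ∈ ZB)
  if i ∈ ZB then (i : ℤ) else 0

/-- modulus -/
noncomputable def qq (i : ℕ) : ℕ := (Nat.nth Nat.Prime i) ^ 4

/-- the free set -/
def Fr : Set ℕ := {n : ℕ | ∀ i, ¬ ((Nat.nth Nat.Prime i : ℤ)) ^ 4 ∣ ((n : ℤ) - aa i)}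

noncomputable def ff : ℕ → ℝ := fun N =>
  (∑ m ∈ Finset.Icc 1 N,
      Set.indicator Fr (fun n => 1 / (n : ℝ)) m) / Real.log N

lemma two_le_nth_prime (i : ℕ) : 2 ≤ Nat.nth Nat.Prime i :=
  (Nat.nth_mem_of_infinite Nat.infinite_setOf_prime i).two_le

lemma add_two_le_nth_prime (i : ℕ) : i + 2 ≤ Nat.nth Nat.Prime i := by
  induction i with
  | zero => simp [Nat.nth_prime_zero_eq_two]
  | succ n ih =>
      have h : Nat.nth Nat.Prime n < Nat.nth Nat.Prime (n + 1) :=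
        (Nat.nth_lt_nth Nat.infinite_setOf_prime (p := Nat.Prime)).2 (by omega)
      omega

lemma lt_qq (i : ℕ) : i + 2 ≤ qq i := by
  have h := add_two_le_nth_prime i
  have : Nat.nth Nat.Prime i ≤ qq i := by
    have h2 : 1 ≤ Nat.nth Nat.Prime i := le_trans (by norm_num) (two_le_nth_prime i)
    calc Nat.nth Nat.Prime i = Nat.nth Nat.Prime i ^ 1 := (pow_one _).symm
    _ ≤ qq i := Nat.pow_le_pow_right h2 (by norm_num)
  omega

/-- sum of reciprocals of moduli is at most 1/4 -/
lemma qq_sum_le (s : Finset ℕ) : ∑ i ∈ s, (1 : ℝ) / qq i ≤ 1 / 4 := by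
  obtain ⟨M, hM⟩ := s.exists_nat_subset_range
  have key : ∀ i : ℕ, (1 : ℝ) / qq i ≤ (1/((i:ℝ)+1) - 1/((i:ℝ)+2))/4 := by
    intro i
    have hq : ((i:ℝ)+1) * ((i:ℝ)+2) * 4 ≤ (qq i : ℝ) := by
      have h0 : (i+2)^4 ≤ qq i := Nat.pow_le_pow_left (add_two_le_nth_prime i) 4
      have h2 : (((i:ℝ)+2)^4 : ℝ) ≤ (qq i : ℝ) := by exact_mod_cast h0
      nlinarith [sq_nonneg ((i:ℝ)+2), sq_nonneg ((i:ℝ))]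
    have h3 : (1 : ℝ)/qq i ≤ 1/(((i:ℝ)+1) * ((i:ℝ)+2) * 4) :=
      one_div_le_one_div_of_le (by positivity) hq
    have h4 : (1:ℝ)/(((i:ℝ)+1) * ((i:ℝ)+2) * 4) = (1/((i:ℝ)+1) - 1/((i:ℝ)+2))/4 := by
      have p1 : ((i:ℝ)+1) ≠ 0 := by positivity
      have p2 : ((i:ℝ)+2) ≠ 0 := by positivity
      field_simp
      ring
    linarith
  have pos : ∀ i : ℕ, (0:ℝ) ≤ (1/((i:ℝ)+1) - 1/((i:ℝ)+2))/4 := by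
    intro i
    have : (1:ℝ)/((i:ℝ)+2) ≤ 1/((i:ℝ)+1) :=
      one_div_le_one_div_of_le (by positivity) (by linarith)
    linarith
  calc ∑ i ∈ s, (1 : ℝ) / qq i ≤ ∑ i ∈ s, (1/((i:ℝ)+1) - 1/((i:ℝ)+2))/4 :=
        Finset.sum_le_sum (fun i _ => key i)
    _ ≤ ∑ i ∈ Finset.range M, (1/((i:ℝ)+1) - 1/((i:ℝ)+2))/4 :=
        Finset.sum_le_sum_of_subset_of_nonneg hM (fun i _ _ => pos i)
    _ = (∑ i ∈ Finset.range M, (1/((i:ℝ)+1) - 1/(((i+1 : ℕ):ℝ)+1)))/4 := by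
        rw [← Finset.sum_div]
        congr 1
        apply Finset.sum_congr rfl
        intro i _
        push_cast
        ring
    _ ≤ 1/4 := by
        rw [Finset.sum_range_sub' (fun i => 1/((i:ℝ)+1))]
        have h5 : (0:ℝ) ≤ ((M:ℝ)+1)⁻¹ := by positivity
        norm_num
        linarith

/-- union bound helper -/
lemma sum_union_le' {A B : Finset ℕ} {f : ℕ → ℝ} (hf : ∀ x, 0 ≤ f x) :
    ∑ x ∈ A ∪ B, f x ≤ ∑ x ∈ A, f x + ∑ x ∈ B, f x := by
  rw [← Finset.union_sdiff_self_eq_union, Finset.sum_union Finset.disjoint_sdiff]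
  have : ∑ x ∈ B \ A, f x ≤ ∑ x ∈ B, f x :=
    Finset.sum_le_sum_of_subset_of_nonneg (Finset.sdiff_subset) (fun x _ _ => hf x)
  linarith

lemma sum_biUnion_le' {s : Finset ℕ} {t : ℕ → Finset ℕ} {f : ℕ → ℝ} (hf : ∀ x, 0 ≤ f x) :
    ∑ x ∈ s.biUnion t, f x ≤ ∑ i ∈ s, ∑ x ∈ t i, f x := by
  classical
  induction s using Finset.induction with
  | empty => simp
  | insert _ _ hnotmem ih =>
      rename_i a s
      rw [Finset.biUnion_insert, Finset.sum_insert hnotmem]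
      exact le_trans (sum_union_le' hf) (by linarith)

lemma sum_map_le {s t : Finset ℕ} {e : ℕ → ℕ} {f g : ℕ → ℝ}
    (hmaps : ∀ x ∈ s, e x ∈ t) (hinj : Set.InjOn e s)
    (hle : ∀ x ∈ s, f x ≤ g (e x)) (hg : ∀ y ∈ t, 0 ≤ g y) :
    ∑ x ∈ s, f x ≤ ∑ y ∈ t, g y := by
  classical
  calc ∑ x ∈ s, f x ≤ ∑ x ∈ s, g (e x) := Finset.sum_le_sum hle
  _ = ∑ y ∈ s.image e, g y := (Finset.sum_image (fun x hx y hy h => hinj hx hy h)).symm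
  _ ≤ ∑ y ∈ t, g y := Finset.sum_le_sum_of_subset_of_nonneg
      (Finset.image_subset_iff.mpr hmaps) (fun y hy _ => hg y hy)

/-- Sum of `1/m` over a set contained in `{r + q t : t ≥ 1} ∩ [1,N]` is at most `H(N)/q`. -/
lemma apSum_le (q N r : ℕ) (hq : 1 ≤ q) (s : Finset ℕ)
    (hs : ∀ m ∈ s, m ≤ N ∧ ∃ t, 1 ≤ t ∧ m = r + q * t) :
    ∑ m ∈ s, (1 : ℝ) / m ≤ (∑ m ∈ Finset.Icc 1 N, (1 : ℝ) / m) / q := by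
  classical
  have key := sum_map_le (s := s) (t := Finset.Icc 1 N) (e := fun m => (m - r)/q)
    (f := fun m => (1:ℝ)/m) (g := fun t => (1:ℝ)/q * (1/t)) ?_ ?_ ?_ ?_
  · calc ∑ m ∈ s, (1 : ℝ) / m ≤ ∑ t ∈ Finset.Icc 1 N, (1:ℝ)/q * (1/t) := key
    _ = (∑ m ∈ Finset.Icc 1 N, (1 : ℝ) / m) / q := by
        rw [← Finset.mul_sum]; ring
  · intro m hm
    obtain ⟨hmN, t, ht1, hmt⟩ := hs m hm
    have he : (m - r)/q = t := by subst hmt; simp [Nat.mul_div_cancel_left t hq]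
    show (m - r)/q ∈ Finset.Icc 1 N
    rw [he]
    refine Finset.mem_Icc.mpr ⟨ht1, ?_⟩
    have h2 : q * t ≤ N := le_trans (hmt ▸ Nat.le_add_left (q*t) r) hmN
    calc t ≤ q * t := Nat.le_mul_of_pos_left t hq
    _ ≤ N := h2
  · intro m hm m' hm' hee
    obtain ⟨hmN, t, ht1, hmt⟩ := hs m hm
    obtain ⟨hmN', t', ht1', hmt'⟩ := hs m' hm'
    have he : (m - r)/q = t := by subst hmt; simp [Nat.mul_div_cancel_left t hq]
    have he' : (m' - r)/q = t' := by subst hmt'; simp [Nat.mul_div_cancel_left t' hq]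
    have hee' : (m - r)/q = (m' - r)/q := hee
    rw [he, he'] at hee'
    rw [hmt, hmt', hee']
  · intro m hm
    obtain ⟨hmN, t, ht1, hmt⟩ := hs m hm
    have he : (m - r)/q = t := by subst hmt; simp [Nat.mul_div_cancel_left t hq]
    show (1:ℝ)/m ≤ (1:ℝ)/q * (1/(((m - r)/q : ℕ) : ℝ))
    rw [he, div_mul_div_comm, one_mul]
    apply one_div_le_one_div_of_le
    · have h1 : (0:ℕ) < q*t := Nat.mul_pos (by omega) (by omega)
      have h2 : (0:ℝ) < ((q*t : ℕ) : ℝ) := by exact_mod_cast h1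
      push_cast at h2
      exact h2
    · have h2 : q*t ≤ m := hmt ▸ Nat.le_add_left (q*t) r
      have h3 : ((q*t : ℕ) : ℝ) ≤ (m : ℝ) := by exact_mod_cast h2
      push_cast at h3
      exact h3
  · intro y _; positivity

lemma qq_cast (i : ℕ) : ((Nat.nth Nat.Prime i : ℤ)) ^ 4 = (qq i : ℤ) := by
  simp [qq]

lemma one_le_of_mem_ZB {i : ℕ} (h : i ∈ ZB) : 1 ≤ i := by
  obtain ⟨k, hk1, _⟩ := h
  have : 0 < 2 ^ (500 * 1000 ^ k) := pow_pos (by norm_num) _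
  omega

open scoped Classical in
/-- The key class-sum bound. -/
lemma classSum_le (i N : ℕ) :
    ∑ m ∈ (Finset.Icc 1 N).filter
        (fun m : ℕ => ((Nat.nth Nat.Prime i : ℤ)) ^ 4 ∣ ((m : ℤ) - aa i)), (1 : ℝ) / m
    ≤ (if i ∈ ZB then (1:ℝ)/i else 0)
      + (∑ m ∈ Finset.Icc 1 N, (1:ℝ)/m) / qq i := by
  classical
  have hq1 : 1 ≤ qq i := le_trans (by omega) (lt_qq i)
  have hiq : i < qq i := by have := lt_qq i; omega
  by_cases hZ : i ∈ ZB
  · have hai : aa i = (i : ℤ) := by simp only [aa]; rw [if_pos hZ]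
    have hi1 : 1 ≤ i := one_le_of_mem_ZB hZ
    set s := (Finset.Icc 1 N).filter
        (fun m : ℕ => ((Nat.nth Nat.Prime i : ℤ)) ^ 4 ∣ ((m : ℤ) - aa i)) with hsdef
    have herase : ∑ m ∈ s.erase i, (1 : ℝ) / m
        ≤ (∑ m ∈ Finset.Icc 1 N, (1:ℝ)/m) / qq i := by
      apply apSum_le (qq i) N i hq1
      intro m hm
      have hmi : m ≠ i := Finset.ne_of_mem_erase hm
      have hms : m ∈ s := Finset.mem_of_mem_erase hm
      rw [hsdef, Finset.mem_filter, Finset.mem_Icc] at hms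
      obtain ⟨⟨hm1, hmN⟩, hdvd⟩ := hms
      rw [qq_cast, hai] at hdvd
      refine ⟨hmN, ?_⟩
      have hgt : i < m := by
        by_contra hle
        push_neg at hle
        have hlt : m < i := lt_of_le_of_ne hle hmi
        have hd2 : (qq i : ℤ) ∣ ((i : ℤ) - m) := by
          have := hdvd.neg_right
          simpa using this
        have hpos : (0 : ℤ) < (i : ℤ) - m := by
          have : (m : ℤ) < (i : ℤ) := by exact_mod_cast hlt
          omega
        have hle2 := Int.le_of_dvd hpos hd2
        have hqi : ((qq i : ℕ) : ℤ) ≤ (i : ℤ) - m := hle2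
        have : (i : ℤ) < (qq i : ℤ) := by exact_mod_cast hiq
        omega
      have hdnat : qq i ∣ (m - i) := by
        have h5 : (qq i : ℤ) ∣ ((m - i : ℕ) : ℤ) := by
          rwa [Int.ofNat_sub (le_of_lt hgt)]
        exact_mod_cast h5
      obtain ⟨t, ht⟩ := hdnat
      refine ⟨t, ?_, by omega⟩
      rcases Nat.eq_zero_or_pos t with rfl | hpos
      · omega
      · exact hpos
    have hsum : ∑ m ∈ s, (1 : ℝ) / m ≤ 1/i + ∑ m ∈ s.erase i, (1 : ℝ) / m := by
      by_cases hi : i ∈ s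
      · rw [← Finset.add_sum_erase s _ hi]
      · rw [Finset.erase_eq_of_notMem hi]
        have : (0:ℝ) ≤ 1/i := by positivity
        linarith
    rw [if_pos hZ]
    calc ∑ m ∈ s, (1 : ℝ) / m ≤ 1/i + ∑ m ∈ s.erase i, (1 : ℝ) / m := hsum
    _ ≤ 1/i + (∑ m ∈ Finset.Icc 1 N, (1:ℝ)/m) / qq i := by linarith
  · have hai : aa i = 0 := by simp only [aa]; rw [if_neg hZ]
    rw [if_neg hZ, zero_add]
    apply apSum_le (qq i) N 0 hq1
    intro m hm
    rw [Finset.mem_filter, Finset.mem_Icc] at hm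
    obtain ⟨⟨hm1, hmN⟩, hdvd⟩ := hm
    rw [qq_cast, hai, sub_zero] at hdvd
    have hdnat : qq i ∣ m := by exact_mod_cast hdvd
    obtain ⟨t, ht⟩ := hdnat
    refine ⟨hmN, t, ?_, by omega⟩
    rcases Nat.eq_zero_or_pos t with rfl | hpos
    · omega
    · exact hpos

noncomputable def Hs (N : ℕ) : ℝ := ∑ m ∈ Finset.Icc 1 N, (1 : ℝ) / m

lemma Hs_eq_harmonic (N : ℕ) : Hs N = (harmonic N : ℝ) := by
  rw [Hs, harmonic_eq_sum_Icc]
  push_cast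
  simp [one_div]

lemma Hs_nonneg (N : ℕ) : 0 ≤ Hs N := by
  apply Finset.sum_nonneg
  intro m _
  positivity

lemma log_le_Hs (N : ℕ) : Real.log N ≤ Hs N := by
  rw [Hs_eq_harmonic]
  calc Real.log N ≤ Real.log (N + 1) := by
        rcases Nat.eq_zero_or_pos N with rfl | hN
        · simp
        · apply Real.log_le_log (by exact_mod_cast hN)
          push_cast
          linarith
  _ ≤ (harmonic N : ℝ) := by exact_mod_cast log_add_one_le_harmonic N

lemma Hs_le (N : ℕ) : Hs N ≤ 1 + Real.log N := by
  rw [Hs_eq_harmonic]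
  exact_mod_cast harmonic_le_one_add_log N

open scoped Classical in
noncomputable def TT (N : ℕ) : ℝ :=
  ∑ m ∈ (Finset.Icc 1 N).filter (fun m : ℕ => m ∉ Fr), (1 : ℝ) / m

open scoped Classical in
lemma num_eq (N : ℕ) :
    ∑ m ∈ Finset.Icc 1 N, Set.indicator Fr (fun n => 1 / (n : ℝ)) m = Hs N - TT N := by
  have h1 : ∑ m ∈ Finset.Icc 1 N, Set.indicator Fr (fun n => 1 / (n : ℝ)) m
      = ∑ m ∈ (Finset.Icc 1 N).filter (fun m : ℕ => m ∈ Fr), (1 : ℝ) / m := by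
    simpa using Finset.sum_indicator_eq_sum_filter (Finset.Icc 1 N)
      (fun _ (n : ℕ) => 1 / (n : ℝ)) (fun _ => Fr) id
  have h2 := Finset.sum_filter_add_sum_filter_not (Finset.Icc 1 N)
    (fun m : ℕ => m ∈ Fr) (fun m : ℕ => (1 : ℝ) / m)
  rw [h1, TT, Hs, ← h2]
  ring

open scoped Classical in
/-- key upper bound on the removed sum -/
lemma TT_le (N : ℕ) :
    TT N ≤ (∑ i ∈ (Finset.range (N+1)).filter (fun i : ℕ => i ∈ ZB), (1:ℝ)/i)
      + Hs N / 4 := by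
  have hsub : (Finset.Icc 1 N).filter (fun m : ℕ => m ∉ Fr)
      ⊆ (Finset.range (N+1)).biUnion (fun i => (Finset.Icc 1 N).filter
          (fun m : ℕ => ((Nat.nth Nat.Prime i : ℤ)) ^ 4 ∣ ((m : ℤ) - aa i))) := by
    intro m hm
    rw [Finset.mem_filter] at hm
    obtain ⟨hmIcc, hmF⟩ := hm
    have hm1 : 1 ≤ m := (Finset.mem_Icc.mp hmIcc).1
    have hmN : m ≤ N := (Finset.mem_Icc.mp hmIcc).2
    rw [Fr, Set.mem_setOf_eq] at hmF
    push_neg at hmF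
    obtain ⟨i, hi⟩ := hmF
    rw [Finset.mem_biUnion]
    refine ⟨i, ?_, Finset.mem_filter.mpr ⟨hmIcc, hi⟩⟩
    rw [Finset.mem_range]
    rw [qq_cast] at hi
    have hiq : i < qq i := by have := lt_qq i; omega
    by_cases hZ : i ∈ ZB
    · have hai : aa i = (i : ℤ) := by simp only [aa]; rw [if_pos hZ]
      rw [hai] at hi
      by_contra hgt
      push_neg at hgt
      have hmi : m < i := by omega
      have hd2 : (qq i : ℤ) ∣ ((i : ℤ) - m) := by
        have := hi.neg_right
        simpa using this
      have hpos : (0 : ℤ) < (i : ℤ) - m := by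
        have : (m : ℤ) < (i : ℤ) := by exact_mod_cast hmi
        omega
      have hle2 := Int.le_of_dvd hpos hd2
      have hqi : (i : ℤ) < (qq i : ℤ) := by exact_mod_cast hiq
      omega
    · have hai : aa i = 0 := by simp only [aa]; rw [if_neg hZ]
      rw [hai, sub_zero] at hi
      have hdnat : qq i ∣ m := by exact_mod_cast hi
      have : qq i ≤ m := Nat.le_of_dvd (by omega) hdnat
      omega
  have h1 : TT N ≤ ∑ m ∈ (Finset.range (N+1)).biUnion (fun i => (Finset.Icc 1 N).filter
          (fun m : ℕ => ((Nat.nth Nat.Prime i : ℤ)) ^ 4 ∣ ((m : ℤ) - aa i))), (1:ℝ)/m := by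
    rw [TT]
    apply Finset.sum_le_sum_of_subset_of_nonneg hsub
    intro m _ _
    positivity
  have h2 : ∑ m ∈ (Finset.range (N+1)).biUnion (fun i => (Finset.Icc 1 N).filter
          (fun m : ℕ => ((Nat.nth Nat.Prime i : ℤ)) ^ 4 ∣ ((m : ℤ) - aa i))), (1:ℝ)/m
      ≤ ∑ i ∈ Finset.range (N+1), ∑ m ∈ (Finset.Icc 1 N).filter
          (fun m : ℕ => ((Nat.nth Nat.Prime i : ℤ)) ^ 4 ∣ ((m : ℤ) - aa i)), (1:ℝ)/m := by
    apply sum_biUnion_le'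
    intro x
    positivity
  have h3 : ∑ i ∈ Finset.range (N+1), ∑ m ∈ (Finset.Icc 1 N).filter
          (fun m : ℕ => ((Nat.nth Nat.Prime i : ℤ)) ^ 4 ∣ ((m : ℤ) - aa i)), (1:ℝ)/m
      ≤ ∑ i ∈ Finset.range (N+1),
          ((if i ∈ ZB then (1:ℝ)/i else 0) + Hs N / qq i) :=
    Finset.sum_le_sum (fun i _ => classSum_le i N)
  have h4 : ∑ i ∈ Finset.range (N+1),
          ((if i ∈ ZB then (1:ℝ)/i else 0) + Hs N / qq i)
      = (∑ i ∈ (Finset.range (N+1)).filter (fun i : ℕ => i ∈ ZB), (1:ℝ)/i)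
        + Hs N * ∑ i ∈ Finset.range (N+1), (1:ℝ)/qq i := by
    rw [Finset.sum_add_distrib, Finset.sum_filter]
    congr 1
    rw [Finset.mul_sum]
    apply Finset.sum_congr rfl
    intro i _
    rw [div_eq_mul_one_div]
  have h5 : Hs N * ∑ i ∈ Finset.range (N+1), (1:ℝ)/qq i ≤ Hs N * (1/4) := by
    apply mul_le_mul_of_nonneg_left (qq_sum_le _) (Hs_nonneg N)
  calc TT N ≤ _ := h1
  _ ≤ _ := h2
  _ ≤ _ := h3
  _ = _ := h4
  _ ≤ (∑ i ∈ (Finset.range (N+1)).filter (fun i : ℕ => i ∈ ZB), (1:ℝ)/i) + Hs N * (1/4) := by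
      linarith
  _ = _ := by ring

lemma log_pow2 (e : ℕ) : Real.log ((2^e : ℕ) : ℝ) = e * Real.log 2 := by
  have h : ((2^e : ℕ) : ℝ) = (2:ℝ)^e := by push_cast; ring
  rw [h, Real.log_pow]

lemma geomSum_le (k : ℕ) : ∑ j ∈ Finset.range (k+1), (1000:ℕ)^j ≤ 2 * 1000^k := by
  induction k with
  | zero => simp
  | succ n ih =>
      rw [Finset.sum_range_succ]
      have h1 : (1000:ℕ)^(n+1) = 1000 * 1000^n := by ring
      have h2 : 2 * (1000:ℕ)^(n+1) = 2000 * 1000^n := by ring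
      omega

lemma succ_le_pow (k : ℕ) : k + 1 ≤ 1000^k := by
  induction k with
  | zero => simp
  | succ n ih =>
      have h1 : (1000:ℕ)^(n+1) = 1000 * 1000^n := by ring
      have h2 : 1 ≤ (1000:ℕ)^n := Nat.one_le_pow _ _ (by norm_num)
      omega

open scoped Classical in
lemma A_le (k : ℕ) :
    ∑ i ∈ (Finset.range (2^(100000 * 1000^k)+1)).filter (fun i : ℕ => i ∈ ZB), (1:ℝ)/i
      ≤ (k+1 : ℝ) + 2000 * 1000^k * Real.log 2 := by
  have hsub : (Finset.range (2^(100000 * 1000^k)+1)).filter (fun i : ℕ => i ∈ ZB)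
      ⊆ (Finset.range (k+1)).biUnion
          (fun j => Finset.Ioc (2^(500 * 1000^j)) (2^(1000 * 1000^j))) := by
    intro i hi
    rw [Finset.mem_filter, Finset.mem_range] at hi
    obtain ⟨hiN, j, hj1, hj2⟩ := hi
    rw [Finset.mem_biUnion]
    refine ⟨j, ?_, Finset.mem_Ioc.mpr ⟨hj1, hj2⟩⟩
    rw [Finset.mem_range]
    by_contra hgt
    push_neg at hgt
    have he : 500 * 1000^(k+1) ≤ 500 * 1000^j :=
      Nat.mul_le_mul_left _ (Nat.pow_le_pow_right (by norm_num) hgt)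
    have h1 : 2^(100000 * 1000^k) < 2^(500 * 1000^(k+1)) := by
      apply Nat.pow_lt_pow_right (by norm_num)
      have : (1000:ℕ)^(k+1) = 1000 * 1000^k := by ring
      have h2 : 1 ≤ (1000:ℕ)^k := Nat.one_le_pow _ _ (by norm_num)
      omega
    have h3 : 2^(500 * 1000^(k+1)) ≤ 2^(500 * 1000^j) :=
      Nat.pow_le_pow_right (by norm_num) he
    omega
  have h1 : ∑ i ∈ (Finset.range (2^(100000 * 1000^k)+1)).filter (fun i : ℕ => i ∈ ZB), (1:ℝ)/i
      ≤ ∑ j ∈ Finset.range (k+1), ∑ i ∈ Finset.Ioc ((2:ℕ)^(500 * 1000^j)) (2^(1000 * 1000^j)), (1:ℝ)/i := by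
    refine le_trans (Finset.sum_le_sum_of_subset_of_nonneg hsub ?_) (sum_biUnion_le' ?_)
    · intro i _ _; positivity
    · intro i; positivity
  have h2 : ∀ j : ℕ, ∑ i ∈ Finset.Ioc ((2:ℕ)^(500 * 1000^j)) (2^(1000 * 1000^j)), (1:ℝ)/i
      ≤ 1 + (1000 * 1000^j : ℕ) * Real.log 2 := by
    intro j
    have hsub2 : Finset.Ioc ((2:ℕ)^(500 * 1000^j)) (2^(1000 * 1000^j))
        ⊆ Finset.Icc 1 (2^(1000 * 1000^j)) := by
      intro i hi
      rw [Finset.mem_Ioc] at hi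
      rw [Finset.mem_Icc]
      have : 0 < 2^(500 * 1000^j) := pow_pos (by norm_num) _
      omega
    calc ∑ i ∈ Finset.Ioc ((2:ℕ)^(500 * 1000^j)) (2^(1000 * 1000^j)), (1:ℝ)/i
        ≤ Hs (2^(1000 * 1000^j)) :=
          Finset.sum_le_sum_of_subset_of_nonneg hsub2 (fun i _ _ => by positivity)
      _ ≤ 1 + Real.log ((2^(1000 * 1000^j) : ℕ) : ℝ) := Hs_le _
      _ = 1 + (1000 * 1000^j : ℕ) * Real.log 2 := by rw [log_pow2]
  have h3 : ∑ j ∈ Finset.range (k+1), (1 + ((1000 * 1000^j : ℕ) : ℝ) * Real.log 2)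
      ≤ (k+1 : ℝ) + 2000 * 1000^k * Real.log 2 := by
    rw [Finset.sum_add_distrib]
    simp only [Finset.sum_const, Finset.card_range, nsmul_eq_mul, mul_one]
    have h4 : ∑ j ∈ Finset.range (k+1), ((1000 * 1000^j : ℕ) : ℝ) * Real.log 2
        = ((∑ j ∈ Finset.range (k+1), 1000 * 1000^j : ℕ) : ℝ) * Real.log 2 := by
      rw [← Finset.sum_mul]
      congr 1
      push_cast
      ring
    rw [h4]
    have h5 : (∑ j ∈ Finset.range (k+1), 1000 * 1000^j : ℕ) ≤ 2000 * 1000^k := by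
      rw [← Finset.mul_sum]
      have := geomSum_le k
      omega
    have h6 : ((∑ j ∈ Finset.range (k+1), 1000 * 1000^j : ℕ) : ℝ) ≤ ((2000 * 1000^k : ℕ) : ℝ) := by
      exact_mod_cast h5
    have hlog : (0:ℝ) ≤ Real.log 2 := Real.log_nonneg (by norm_num)
    have h8 := mul_le_mul_of_nonneg_right h6 hlog
    push_cast at h8 ⊢
    linarith
  calc _ ≤ _ := h1
    _ ≤ ∑ j ∈ Finset.range (k+1), (1 + ((1000 * 1000^j : ℕ) : ℝ) * Real.log 2) :=
        Finset.sum_le_sum (fun j _ => h2 j)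
    _ ≤ _ := h3

lemma indicator_le_one_div (m : ℕ) :
    Set.indicator Fr (fun n => 1 / (n : ℝ)) m ≤ 1 / (m : ℝ) := by
  classical
  by_cases h : m ∈ Fr
  · rw [Set.indicator_of_mem h]
  · rw [Set.indicator_of_notMem h]; positivity

lemma indicator_nonneg' (m : ℕ) :
    0 ≤ Set.indicator Fr (fun n => 1 / (n : ℝ)) m := by
  apply Set.indicator_nonneg
  intro n _
  positivity

lemma num_nonneg (N : ℕ) :
    0 ≤ ∑ m ∈ Finset.Icc 1 N, Set.indicator Fr (fun n => 1 / (n : ℝ)) m :=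
  Finset.sum_nonneg (fun m _ => indicator_nonneg' m)

lemma ff_nonneg (N : ℕ) : 0 ≤ ff N :=
  div_nonneg (num_nonneg N) (Real.log_natCast_nonneg N)

lemma ff_le_three {N : ℕ} (hN : 2 ≤ N) : ff N ≤ 3 := by
  have hlog2 : (0.6931471803 : ℝ) < Real.log 2 := Real.log_two_gt_d9
  have hlogN : Real.log 2 ≤ Real.log N := by
    apply Real.log_le_log (by norm_num)
    exact_mod_cast hN
  have hpos : 0 < Real.log N := by linarith
  have hnum : ∑ m ∈ Finset.Icc 1 N, Set.indicator Fr (fun n => 1 / (n : ℝ)) m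
      ≤ 1 + Real.log N :=
    le_trans (Finset.sum_le_sum (fun m _ => indicator_le_one_div m)) (Hs_le N)
  rw [ff, div_le_iff₀ hpos]
  nlinarith

lemma low_phase (k : ℕ) : ff (2^(1000 * 1000^k)) ≤ 3/5 := by
  have hlog2 : (0.6931471803 : ℝ) < Real.log 2 := Real.log_two_gt_d9
  set N := 2^(1000 * 1000^k) with hN
  set lo := 2^(500 * 1000^k) with hlo
  have h1lo : 1 ≤ lo := Nat.one_le_pow _ _ (by norm_num)
  have hloN : lo ≤ N := Nat.pow_le_pow_right (by norm_num) (by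
    have : 1 ≤ (1000:ℕ)^k := Nat.one_le_pow _ _ (by norm_num)
    omega)
  have hIccsub : Finset.Icc 1 lo ⊆ Finset.Icc 1 N :=
    Finset.Icc_subset_Icc_right hloN
  have hnum : ∑ m ∈ Finset.Icc 1 N, Set.indicator Fr (fun n => 1 / (n : ℝ)) m
      ≤ Hs lo := by
    rw [← Finset.sum_sdiff hIccsub]
    have hz : ∑ m ∈ Finset.Icc 1 N \ Finset.Icc 1 lo,
        Set.indicator Fr (fun n => 1 / (n : ℝ)) m = 0 := by
      apply Finset.sum_eq_zero
      intro m hm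
      rw [Finset.mem_sdiff, Finset.mem_Icc, Finset.mem_Icc] at hm
      have hm' : lo < m ∧ m ≤ N := by omega
      have hmZ : m ∈ ZB := ⟨k, hm'.1, hm'.2⟩
      have hmF : m ∉ Fr := by
        rw [Fr, Set.mem_setOf_eq]
        push_neg
        refine ⟨m, ?_⟩
        have hai : aa m = (m : ℤ) := by simp only [aa]; rw [if_pos hmZ]
        rw [hai, sub_self]
        exact dvd_zero _
      exact Set.indicator_of_notMem hmF _
    rw [hz, zero_add]
    exact Finset.sum_le_sum (fun m _ => indicator_le_one_div m)
  have hHlo : Hs lo ≤ 1 + (500 * 1000^k : ℕ) * Real.log 2 := by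
    calc Hs lo ≤ 1 + Real.log lo := Hs_le lo
    _ = 1 + (500 * 1000^k : ℕ) * Real.log 2 := by rw [hlo, log_pow2]
  have hlogN : Real.log N = (1000 * 1000^k : ℕ) * Real.log 2 := by rw [hN, log_pow2]
  have hpk : (1:ℝ) ≤ ((1000:ℕ)^k : ℝ) := by
    exact_mod_cast Nat.one_le_pow k 1000 (by norm_num)
  have hcast : ((1000 * 1000^k : ℕ) : ℝ) = 1000 * ((1000:ℕ)^k : ℝ) := by push_cast; ring
  have hcast2 : ((500 * 1000^k : ℕ) : ℝ) = 500 * ((1000:ℕ)^k : ℝ) := by push_cast; ring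
  have hpos : 0 < Real.log N := by
    rw [hlogN, hcast]
    nlinarith
  rw [ff, div_le_iff₀ hpos]
  have : ∑ m ∈ Finset.Icc 1 N, Set.indicator Fr (fun n => 1 / (n : ℝ)) m
      ≤ 1 + (500 * 1000^k : ℕ) * Real.log 2 := le_trans hnum hHlo
  rw [hlogN]
  rw [hcast2] at this
  rw [hcast]
  have hGl : (0.6931471803:ℝ) ≤ ((1000:ℕ)^k : ℝ) * Real.log 2 := by
    have := mul_le_mul hpk hlog2.le (by norm_num) (le_trans zero_le_one hpk)
    linarith
  nlinarith

open scoped Classical in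
lemma high_phase (k : ℕ) : 13/20 ≤ ff (2^(100000 * 1000^k)) := by
  have hlog2 : (0.6931471803 : ℝ) < Real.log 2 := Real.log_two_gt_d9
  set N := 2^(100000 * 1000^k) with hN
  have hlogN : Real.log N = (100000 * 1000^k : ℕ) * Real.log 2 := by rw [hN, log_pow2]
  have hpk : (1:ℝ) ≤ ((1000:ℕ)^k : ℝ) := by
    exact_mod_cast Nat.one_le_pow k 1000 (by norm_num)
  have hcast : ((100000 * 1000^k : ℕ) : ℝ) = 100000 * ((1000:ℕ)^k : ℝ) := by push_cast; ring
  have hpos : 0 < Real.log N := by rw [hlogN, hcast]; nlinarith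
  have hTT : TT N ≤ ((k+1 : ℝ) + 2000 * 1000^k * Real.log 2) + Hs N / 4 :=
    le_trans (TT_le N) (by
      have := A_le k
      push_cast at this ⊢
      linarith)
  have hHs_up : Hs N ≤ 1 + Real.log N := Hs_le N
  have hHs_lo : Real.log N ≤ Hs N := log_le_Hs N
  have hk1 : ((k:ℝ)+1) ≤ ((1000:ℕ)^k : ℝ) := by
    exact_mod_cast succ_le_pow k
  have hTT2 : TT N ≤ (7/20) * Real.log N := by
    have e1 : (2000 * 1000^k : ℝ) * Real.log 2 = 2000 * ((1000:ℕ)^k : ℝ) * Real.log 2 := by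
      push_cast; ring
    rw [hlogN, hcast]
    rw [hlogN, hcast] at hHs_up
    have hl2 : Real.log 2 < 0.6931471808 := Real.log_two_lt_d9
    nlinarith [hTT, hHs_up]
  have hnum : Hs N - TT N ≥ Real.log N - (7/20) * Real.log N := by linarith
  rw [ff, num_eq, le_div_iff₀ hpos]
  linarith

lemma ff_def_eq : ff = (fun N : ℕ =>
    (∑ m ∈ Finset.Icc 1 N,
      Set.indicator {n : ℕ | ∀ i, ¬ ((Nat.nth Nat.Prime i : ℤ)) ^ 4 ∣ ((n : ℤ) - aa i)}
        (fun n => 1 / (n : ℝ)) m) / Real.log N) := rfl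

lemma pow_ge_self (b : ℕ) (c : ℕ) (hc : 1 ≤ c) : b ≤ 2^(c * 1000^b) := by
  have h1 : b < 2^b := (Nat.lt_two_pow_self (n := b))
  have h2 : b ≤ c * 1000^b := by
    have h3 : b ≤ 1000^b := le_trans (le_of_lt ((Nat.lt_two_pow_self (n := b))))
      (Nat.pow_le_pow_left (by norm_num) b)
    calc b ≤ 1000^b := h3
    _ ≤ c * 1000^b := Nat.le_mul_of_pos_left _ hc
  calc b ≤ 2^b := le_of_lt h1
  _ ≤ 2^(c * 1000^b) := Nat.pow_le_pow_right (by norm_num) h2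

lemma liminf_ff_le : Filter.liminf ff Filter.atTop ≤ 3/5 := by
  apply Filter.liminf_le_of_frequently_le
  · rw [Filter.frequently_atTop]
    intro b
    refine ⟨2^(1000 * 1000^b), pow_ge_self b 1000 (by norm_num), low_phase b⟩
  · exact ⟨0, Filter.eventually_map.mpr (Filter.Eventually.of_forall ff_nonneg)⟩

lemma le_limsup_ff : 13/20 ≤ Filter.limsup ff Filter.atTop := by
  apply Filter.le_limsup_of_frequently_le
  · rw [Filter.frequently_atTop]
    intro b
    refine ⟨2^(100000 * 1000^b), pow_ge_self b 100000 (by norm_num), high_phase b⟩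
  · refine ⟨3, Filter.eventually_map.mpr ?_⟩
    filter_upwards [Filter.eventually_ge_atTop 2] with N hN
    exact ff_le_three hN

end Aux

theorem exists_sieve_without_logarithmic_density :
    ∃ a : ℕ → ℤ,
      liminf (fun N : ℕ =>
          (∑ m ∈ Finset.Icc 1 N,
            Set.indicator {n : ℕ | ∀ i, ¬ ((Nat.nth Nat.Prime i : ℤ)) ^ 4 ∣ ((n : ℤ) - a i)}
              (fun n => 1 / (n : ℝ)) m) / Real.log N) atTop
      < limsup (fun N : ℕ =>
          (∑ m ∈ Finset.Icc 1 N,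
            Set.indicator {n : ℕ | ∀ i, ¬ ((Nat.nth Nat.Prime i : ℤ)) ^ 4 ∣ ((n : ℤ) - a i)}
              (fun n => 1 / (n : ℝ)) m) / Real.log N) atTop := by
  refine ⟨aa, ?_⟩
  rw [← ff_def_eq]
  calc Filter.liminf ff Filter.atTop ≤ 3/5 := liminf_ff_le
  _ < 13/20 := by norm_num
  _ ≤ Filter.limsup ff Filter.atTop := le_limsup_ff
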